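/- Let w ∈ C²((0,a₀]) solve w'' + (w/r)' = (5w/(2(1+w²)))(w')² + (w³/(2r²))(3+w²) + (λ/r)(1+w²)^{5/2} with lim_{r→0⁺} w(r) = 0. Then w(r) - (λ/2) r log r extends to a C¹ function on [0,a₀]; in particular lim_{r→0⁺}(w'(r) - (λ/2) log r) exists. -/

import Mathlib

open Real Set Filter Topology
open MeasureTheory

private lemma sqrt5_bounds {x : ℝ} (hx : |x| ≤ 1/10) :
    1 ≤ (Real.sqrt (1 + x ^ 2)) ^ 5 ∧ (Real.sqrt (1 + x ^ 2)) ^ 5 ≤ 2 ∧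
      (Real.sqrt (1 + x ^ 2)) ^ 5 - 1 ≤ 3 * x ^ 2 := by
  have hx2 : x ^ 2 ≤ 1/100 := by
    have := abs_nonneg x
    nlinarith [sq_abs x]
  have h0 : (0:ℝ) ≤ 1 + x ^ 2 := by positivity
  have h1 : 1 ≤ Real.sqrt (1 + x ^ 2) := by
    nlinarith [Real.sq_sqrt h0, Real.sqrt_nonneg (1 + x ^ 2)]
  have h2 : Real.sqrt (1 + x ^ 2) ≤ 1 + x ^ 2 / 2 := by
    rw [show (1:ℝ) + x ^ 2 / 2 = Real.sqrt ((1 + x^2/2)^2) by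
      rw [Real.sqrt_sq (by positivity)]]
    exact Real.sqrt_le_sqrt (by nlinarith)
  have h1' : 1 ≤ (Real.sqrt (1 + x ^ 2)) ^ 5 := one_le_pow₀ h1
  have h2' : (Real.sqrt (1 + x ^ 2)) ^ 5 ≤ (1 + x ^ 2 / 2) ^ 5 :=
    pow_le_pow_left₀ (by positivity) h2 5
  refine ⟨h1', ?_, ?_⟩
  · nlinarith [sq_nonneg x, sq_nonneg (x^2), sq_nonneg (x^3), sq_nonneg (x^4), sq_nonneg (x^5)]
  · nlinarith [sq_nonneg x, sq_nonneg (x^2), sq_nonneg (x^3), sq_nonneg (x^4), sq_nonneg (x^5)]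

private lemma ineq_wF {x y r lam : ℝ} (hr : 0 < r) (hx : |x| ≤ 1/10) :
    -((y ^ 2 + x ^ 2 / (2 * r ^ 2)) / 2) - 4 * lam ^ 2 ≤
      x * (5 * x / (2 * (1 + x ^ 2)) * y ^ 2 + x ^ 3 / (2 * r ^ 2) * (3 + x ^ 2)
        + lam / r * (Real.sqrt (1 + x ^ 2)) ^ 5) := by
  obtain ⟨hs1, hs2, -⟩ := sqrt5_bounds hx
  set s := (Real.sqrt (1 + x ^ 2)) ^ 5 with hs
  have e1 : 0 ≤ x * (5 * x / (2 * (1 + x ^ 2)) * y ^ 2) := by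
    have : x * (5 * x / (2 * (1 + x ^ 2)) * y ^ 2) = 5 * x ^ 2 * y ^ 2 / (2 * (1 + x ^ 2)) := by
      ring
    rw [this]; positivity
  have e2 : 0 ≤ x * (x ^ 3 / (2 * r ^ 2) * (3 + x ^ 2)) := by
    have : x * (x ^ 3 / (2 * r ^ 2) * (3 + x ^ 2)) = x ^ 4 * (3 + x ^ 2) / (2 * r ^ 2) := by
      ring
    rw [this]; positivity
  have e3 : -(x ^ 2 / (4 * r ^ 2) + 4 * lam ^ 2) ≤ x * (lam / r * s) := by
    have habs : |x * (lam / r * s)| ≤ x ^ 2 / (4 * r ^ 2) + 4 * lam ^ 2 := by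
      have h1 : |x * (lam / r * s)| = |x| * |lam| * s / r := by
        rw [abs_mul, abs_mul, abs_div, abs_of_pos hr, abs_of_nonneg (le_trans one_pos.le hs1)]
        ring
      rw [h1]
      have h2 : |x| * |lam| * s / r ≤ 2 * (|x| / r) * |lam| := by
        rw [div_le_iff₀ hr]
        have : 2 * (|x| / r) * |lam| * r = 2 * |x| * |lam| := by field_simp
        rw [this]
        nlinarith [abs_nonneg x, abs_nonneg lam, mul_nonneg (abs_nonneg x) (abs_nonneg lam)]
      refine h2.trans ?_
      have hX : x ^ 2 / (4 * r ^ 2) = (|x| / r) ^ 2 / 4 := by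
        rw [div_pow, sq_abs]; ring
      rw [hX]
      nlinarith [sq_nonneg (|x| / r - 4 * |lam|), sq_abs lam]
    have := neg_abs_le (x * (lam / r * s))
    linarith [abs_nonneg (x * (lam / r * s))]
  have hsplit : x * (5 * x / (2 * (1 + x ^ 2)) * y ^ 2 + x ^ 3 / (2 * r ^ 2) * (3 + x ^ 2)
      + lam / r * s) = x * (5 * x / (2 * (1 + x ^ 2)) * y ^ 2)
      + x * (x ^ 3 / (2 * r ^ 2) * (3 + x ^ 2)) + x * (lam / r * s) := by ring
  rw [hsplit]
  have hhalf : x ^ 2 / (4 * r ^ 2) ≤ (y ^ 2 + x ^ 2 / (2 * r ^ 2)) / 2 := by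
    have hid : (y ^ 2 + x ^ 2 / (2 * r ^ 2)) / 2 = y ^ 2 / 2 + x ^ 2 / (4 * r ^ 2) := by ring
    rw [hid]
    nlinarith [sq_nonneg y]
  linarith


private lemma ineq_G {x y r r₀ lam : ℝ} (hr : 0 < r) (hrr : r ≤ r₀) (hx : |x| ≤ 1/10) :
    |5 * x / (2 * (1 + x ^ 2)) * y ^ 2 + x ^ 3 / (2 * r ^ 2) * (3 + x ^ 2)
      + lam / r * ((Real.sqrt (1 + x ^ 2)) ^ 5 - 1)|
      ≤ (1 + 6 * |lam| * r₀) * (y ^ 2 + x ^ 2 / (2 * r ^ 2)) := by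
  obtain ⟨hs1, hs2, hs3⟩ := sqrt5_bounds hx
  set s := (Real.sqrt (1 + x ^ 2)) ^ 5 with hsdef
  have hx2 : x ^ 2 ≤ 1/100 := by nlinarith [sq_abs x, abs_nonneg x]
  have hr2 : (0:ℝ) < r ^ 2 := by positivity
  have hT1 : |5 * x / (2 * (1 + x ^ 2)) * y ^ 2| ≤ y ^ 2 := by
    rw [abs_mul, abs_div, abs_of_nonneg (sq_nonneg y)]
    have h1 : |5 * x| ≤ 1/2 := by
      rw [abs_mul, abs_of_nonneg (by norm_num : (0:ℝ) ≤ 5)]; linarith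
    have h2 : (1:ℝ) ≤ |2 * (1 + x ^ 2)| := by
      rw [abs_of_pos (by positivity)]; nlinarith [sq_nonneg x]
    have h3 : |5 * x| / |2 * (1 + x ^ 2)| ≤ 1 := by
      rw [div_le_one (lt_of_lt_of_le one_pos h2)]; linarith
    exact mul_le_of_le_one_left (sq_nonneg y) h3
  have hT2 : |x ^ 3 / (2 * r ^ 2) * (3 + x ^ 2)| ≤ x ^ 2 / (2 * r ^ 2) := by
    rw [abs_mul, abs_div]
    rw [abs_of_pos (by positivity : (0:ℝ) < 2 * r ^ 2),
        abs_of_pos (by positivity : (0:ℝ) < 3 + x ^ 2)]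
    rw [div_mul_eq_mul_div, div_le_div_iff₀ (by positivity) (by positivity)]
    have hx3 : |x ^ 3| = |x| * x ^ 2 := by
      rw [show x ^ 3 = x * x ^ 2 by ring, abs_mul, abs_of_nonneg (sq_nonneg x)]
    rw [hx3]
    have h : |x| * (3 + x ^ 2) ≤ 1 := by nlinarith [abs_nonneg x]
    have h2 := mul_le_mul_of_nonneg_right h
      (mul_nonneg (sq_nonneg x) (by positivity : (0:ℝ) ≤ 2 * r ^ 2))
    nlinarith [h2]
  have hT3 : |lam / r * (s - 1)| ≤ 6 * |lam| * r₀ * (x ^ 2 / (2 * r ^ 2)) := by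
    rw [abs_mul, abs_div, abs_of_pos hr, abs_of_nonneg (by linarith : (0:ℝ) ≤ s - 1)]
    have key : |lam| / r * (s - 1) ≤ |lam| / r * (3 * x ^ 2) := by
      apply mul_le_mul_of_nonneg_left hs3 (by positivity)
    refine key.trans ?_
    have hid : 6 * |lam| * r₀ * (x ^ 2 / (2 * r ^ 2)) = |lam| / r * (3 * x ^ 2) * (r₀ / r) := by
      field_simp; ring
    rw [hid]
    have hge1 : (1:ℝ) ≤ r₀ / r := (one_le_div hr).2 hrr
    nlinarith [mul_nonneg (mul_nonneg (abs_nonneg lam) hr.le) (sq_nonneg x),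
      mul_nonneg (div_nonneg (abs_nonneg lam) hr.le) (by positivity : (0:ℝ) ≤ 3 * x ^ 2)]
  calc |5 * x / (2 * (1 + x ^ 2)) * y ^ 2 + x ^ 3 / (2 * r ^ 2) * (3 + x ^ 2)
      + lam / r * (s - 1)|
      ≤ |5 * x / (2 * (1 + x ^ 2)) * y ^ 2| + |x ^ 3 / (2 * r ^ 2) * (3 + x ^ 2)|
        + |lam / r * (s - 1)| := abs_add_three _ _ _
    _ ≤ y ^ 2 + x ^ 2 / (2 * r ^ 2) + 6 * |lam| * r₀ * (x ^ 2 / (2 * r ^ 2)) := by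
        linarith
    _ ≤ (1 + 6 * |lam| * r₀) * (y ^ 2 + x ^ 2 / (2 * r ^ 2)) := by
        have h1 : (0:ℝ) ≤ 6 * |lam| * r₀ :=
          mul_nonneg (mul_nonneg (by norm_num) (abs_nonneg lam)) (le_trans hr.le hrr)
        nlinarith [sq_nonneg y, div_nonneg (sq_nonneg x) (by positivity : (0:ℝ) ≤ 2 * r ^ 2)]

private noncomputable def Fo (lam : ℝ) (w : ℝ → ℝ) (r : ℝ) : ℝ :=
  5 * w r / (2 * (1 + w r ^ 2)) * deriv w r ^ 2 + w r ^ 3 / (2 * r ^ 2) * (3 + w r ^ 2)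
    + lam / r * Real.sqrt (1 + w r ^ 2) ^ 5

private noncomputable def ee (w : ℝ → ℝ) (r : ℝ) : ℝ :=
  deriv w r ^ 2 + w r ^ 2 / (2 * r ^ 2)

private noncomputable def vv (w : ℝ → ℝ) (r : ℝ) : ℝ := deriv w r + w r / r

private noncomputable def BB (w : ℝ → ℝ) (r : ℝ) : ℝ :=
  deriv w r * w r + w r ^ 2 / (2 * r)

private noncomputable def hh (lam : ℝ) (w : ℝ → ℝ) (r : ℝ) : ℝ :=
  vv w r - lam * Real.log r

private noncomputable def GG (lam : ℝ) (w : ℝ → ℝ) (t : ℝ) : ℝ :=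
  Fo lam w t - lam / t

private noncomputable def rho (lam : ℝ) (w : ℝ → ℝ) (x : ℝ) : ℝ :=
  ∫ t in (0:ℝ)..x, GG lam w t

private noncomputable def PP (w : ℝ → ℝ) (x : ℝ) : ℝ :=
  ∫ t in (0:ℝ)..x, t * vv w t

section basic
variable {lam a₀ : ℝ} {w : ℝ → ℝ}

private lemma basic_facts (hc : ContDiffOn ℝ 2 w (Set.Ioc 0 a₀)) :
    (∀ r ∈ Set.Ioo (0:ℝ) a₀, HasDerivAt w (deriv w r) r) ∧
    (∀ r ∈ Set.Ioo (0:ℝ) a₀, HasDerivAt (deriv w) (deriv (deriv w) r) r) ∧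
    ContinuousOn (deriv w) (Set.Ioo 0 a₀) := by
  have hopen : IsOpen (Set.Ioo (0:ℝ) a₀) := isOpen_Ioo
  have hcIoo : ContDiffOn ℝ 2 w (Set.Ioo 0 a₀) := hc.mono Set.Ioo_subset_Ioc_self
  have hdw1 : ContDiffOn ℝ 1 (deriv w) (Set.Ioo 0 a₀) :=
    hcIoo.deriv_of_isOpen hopen (by norm_num)
  refine ⟨fun r hr => ?_, fun r hr => ?_, hdw1.continuousOn⟩
  · exact ((hcIoo.contDiffAt (hopen.mem_nhds hr)).differentiableAt (by norm_num)).hasDerivAt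
  · exact ((hdw1.contDiffAt (hopen.mem_nhds hr)).differentiableAt (by norm_num)).hasDerivAt

private lemma hasDeriv_vv (hc : ContDiffOn ℝ 2 w (Set.Ioc 0 a₀))
    (ode : ∀ r ∈ Set.Ioo 0 a₀,
      deriv (deriv w) r + deriv (fun t => w t / t) r
        = 5 * w r / (2 * (1 + (w r) ^ 2)) * (deriv w r) ^ 2
          + (w r) ^ 3 / (2 * r ^ 2) * (3 + (w r) ^ 2)
          + (lam / r) * (Real.sqrt (1 + (w r) ^ 2)) ^ 5) :
    ∀ r ∈ Set.Ioo (0:ℝ) a₀, HasDerivAt (vv w) (Fo lam w r) r := by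
  obtain ⟨hw1, hw2, -⟩ := basic_facts hc
  intro r hr
  have hr0 : (0:ℝ) < r := hr.1
  have hq : HasDerivAt (fun t => w t / t) ((deriv w r * r - w r * 1) / r ^ 2) r :=
    (hw1 r hr).div (hasDerivAt_id r) (ne_of_gt hr0)
  have hode := ode r hr
  rw [hq.deriv] at hode
  have : HasDerivAt (vv w) (deriv (deriv w) r + (deriv w r * r - w r * 1) / r ^ 2) r :=
    (hw2 r hr).add hq
  convert this using 1
  rw [Fo]
  linarith [hode]

private lemma hasDeriv_BB (hc : ContDiffOn ℝ 2 w (Set.Ioc 0 a₀))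
    (ode : ∀ r ∈ Set.Ioo 0 a₀,
      deriv (deriv w) r + deriv (fun t => w t / t) r
        = 5 * w r / (2 * (1 + (w r) ^ 2)) * (deriv w r) ^ 2
          + (w r) ^ 3 / (2 * r ^ 2) * (3 + (w r) ^ 2)
          + (lam / r) * (Real.sqrt (1 + (w r) ^ 2)) ^ 5) :
    ∀ r ∈ Set.Ioo (0:ℝ) a₀, HasDerivAt (BB w) (ee w r + w r * Fo lam w r) r := by
  obtain ⟨hw1, hw2, -⟩ := basic_facts hc
  intro r hr
  have hr0 : (0:ℝ) < r := hr.1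
  have hq : HasDerivAt (fun t => w t / t) ((deriv w r * r - w r * 1) / r ^ 2) r :=
    (hw1 r hr).div (hasDerivAt_id r) (ne_of_gt hr0)
  have hode := ode r hr
  rw [hq.deriv] at hode
  have h1 : HasDerivAt (fun t => deriv w t * w t)
      (deriv (deriv w) r * w r + deriv w r * deriv w r) r := (hw2 r hr).mul (hw1 r hr)
  have h2 : HasDerivAt (fun t => w t ^ 2 / (2 * t))
      ((2 * w r ^ 1 * deriv w r * (2 * r) - w r ^ 2 * 2) / (2 * r) ^ 2) r := by
    have hden : HasDerivAt (fun t : ℝ => 2 * t) 2 r := by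
      simpa using (hasDerivAt_id r).const_mul 2
    refine (((hw1 r hr).pow 2).div hden (by positivity)).congr_deriv ?_
    norm_num [Pi.pow_apply]
  have : HasDerivAt (BB w)
      (deriv (deriv w) r * w r + deriv w r * deriv w r
        + (2 * w r ^ 1 * deriv w r * (2 * r) - w r ^ 2 * 2) / (2 * r) ^ 2) r := h1.add h2
  convert this using 1
  rw [ee, Fo]
  have hode' : deriv (deriv w) r
      = (5 * w r / (2 * (1 + w r ^ 2)) * deriv w r ^ 2 + w r ^ 3 / (2 * r ^ 2) * (3 + w r ^ 2)
          + lam / r * Real.sqrt (1 + w r ^ 2) ^ 5) - (deriv w r * r - w r * 1) / r ^ 2 := by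
    linarith [hode]
  rw [hode']
  field_simp
  ring

end basic


private lemma cont_all (hc : ContDiffOn ℝ 2 w (Set.Ioc 0 a₀)) :
    ContinuousOn w (Set.Ioo 0 a₀) ∧ ContinuousOn (deriv w) (Set.Ioo 0 a₀) ∧
    ContinuousOn (ee w) (Set.Ioo 0 a₀) ∧ ContinuousOn (Fo lam w) (Set.Ioo 0 a₀) ∧
    ContinuousOn (BB w) (Set.Ioo 0 a₀) ∧ ContinuousOn (vv w) (Set.Ioo 0 a₀) := by
  have hopen : IsOpen (Set.Ioo (0:ℝ) a₀) := isOpen_Ioo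
  have hcIoo : ContDiffOn ℝ 2 w (Set.Ioo 0 a₀) := hc.mono Set.Ioo_subset_Ioc_self
  have hw : ContinuousOn w (Set.Ioo 0 a₀) := hcIoo.continuousOn
  have hdw : ContinuousOn (deriv w) (Set.Ioo 0 a₀) :=
    hcIoo.continuousOn_deriv_of_isOpen hopen (by norm_num)
  have hne : ∀ r ∈ Set.Ioo (0:ℝ) a₀, r ≠ 0 := fun r hr => ne_of_gt hr.1
  refine ⟨hw, hdw, ?_, ?_, ?_, ?_⟩
  · exact (hdw.pow 2).add ((hw.pow 2).div
      (continuousOn_const.mul (continuousOn_pow 2)) (fun r hr => by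
        have := hr.1; positivity))
  · refine ContinuousOn.add (ContinuousOn.add ?_ ?_) ?_
    · exact ((continuousOn_const.mul hw).div
        (continuousOn_const.mul (continuousOn_const.add (hw.pow 2)))
        (fun r hr => by simp only [Pi.mul_apply, Pi.add_apply, Pi.pow_apply]; nlinarith [sq_nonneg (w r)])).mul (hdw.pow 2)
    · exact ((hw.pow 3).div (continuousOn_const.mul (continuousOn_pow 2))
        (fun r hr => by simp only [Pi.mul_apply]; have := hr.1; positivity)).mul
        (continuousOn_const.add (hw.pow 2))
    · exact (continuousOn_const.div continuousOn_id hne).mul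
        (((Real.continuous_sqrt.comp_continuousOn
          (continuousOn_const.add (hw.pow 2)))).pow 5)
  · exact (hdw.mul hw).add ((hw.pow 2).div (continuousOn_const.mul continuousOn_id)
      (fun r hr => by have := hr.1; positivity))
  · exact hdw.add (hw.div continuousOn_id hne)



section energy
variable {lam a₀ : ℝ} {w : ℝ → ℝ}

private lemma energy_integrable (hc : ContDiffOn ℝ 2 w (Set.Ioc 0 a₀))
    (ode : ∀ r ∈ Set.Ioo 0 a₀,
      deriv (deriv w) r + deriv (fun t => w t / t) r
        = 5 * w r / (2 * (1 + (w r) ^ 2)) * (deriv w r) ^ 2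
          + (w r) ^ 3 / (2 * r ^ 2) * (3 + (w r) ^ 2)
          + (lam / r) * (Real.sqrt (1 + (w r) ^ 2)) ^ 5)
    (lim0 : Tendsto w (𝓝[>] 0) (𝓝 0))
    {r₀ : ℝ} (h0 : 0 < r₀) (hra : r₀ < a₀)
    (hsm : ∀ r ∈ Set.Ioc (0:ℝ) r₀, |w r| ≤ 1/10) :
    IntegrableOn (ee w) (Set.Ioc 0 r₀) := by
  obtain ⟨hw1, hw2, -⟩ := basic_facts hc
  obtain ⟨hcw, hcdw, hcee, hcFo, hcBB, hcvv⟩ := cont_all (lam := lam) hc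
  have hB := hasDeriv_BB hc ode
  have hsub : Set.Ioc (0:ℝ) r₀ ⊆ Set.Ioo 0 a₀ :=
    fun x hx => ⟨hx.1, lt_of_le_of_lt hx.2 hra⟩
  set ψ : ℝ → ℝ := fun r => BB w r + 4 * lam ^ 2 * r with hψdef
  have hψd : ∀ x ∈ Set.Ioo (0:ℝ) r₀, HasDerivAt ψ
      (ee w x + w x * Fo lam w x + 4 * lam ^ 2) x := by
    intro x hx
    have hx' : x ∈ Set.Ioo (0:ℝ) a₀ := ⟨hx.1, lt_trans hx.2 hra⟩
    have h4 : HasDerivAt (fun r : ℝ => 4 * lam ^ 2 * r) (4 * lam ^ 2) x := by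
      simpa using (hasDerivAt_id x).const_mul (4 * lam ^ 2)
    exact (hB x hx').add h4
  have hderiv_nonneg : ∀ x ∈ Set.Ioo (0:ℝ) r₀,
      ee w x / 2 ≤ ee w x + w x * Fo lam w x + 4 * lam ^ 2 := by
    intro x hx
    have hkey := ineq_wF (x := w x) (y := deriv w x) (r := x) (lam := lam) hx.1
      (hsm x ⟨hx.1, hx.2.le⟩)
    simp only [ee, Fo]
    nlinarith [hkey]
  have hψc : ContinuousOn ψ (Set.Ioc 0 r₀) :=
    (hcBB.mono hsub).add (continuousOn_const.mul continuousOn_id)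
  have hmono : MonotoneOn ψ (Set.Ioc 0 r₀) := by
    apply monotoneOn_of_deriv_nonneg (convex_Ioc 0 r₀) hψc
    · intro x hx
      rw [interior_Ioc] at hx
      exact ((hψd x hx).differentiableAt).differentiableWithinAt
    · intro x hx
      rw [interior_Ioc] at hx
      rw [(hψd x hx).deriv]
      have h1 := hderiv_nonneg x hx
      have h2 : 0 ≤ ee w x := by rw [ee]; positivity
      linarith
  -- lower bound for ψ
  have hlow : ∃ m, ∀ r ∈ Set.Ioc (0:ℝ) r₀, m ≤ ψ r := by
    by_contra hcon
    push_neg at hcon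
    obtain ⟨r₁, hr₁, hψr₁⟩ := hcon (-1)
    have hBneg : ∀ r ∈ Set.Ioc (0:ℝ) r₁, BB w r ≤ -1 := by
      intro r hr
      have hmem : r ∈ Set.Ioc (0:ℝ) r₀ := ⟨hr.1, le_trans hr.2 hr₁.2⟩
      have h1 : ψ r ≤ ψ r₁ := hmono hmem hr₁ hr.2
      have hr0 : (0:ℝ) < r := hr.1
      have h2 : (0:ℝ) ≤ 4 * lam ^ 2 * r := by positivity
      have h3 : BB w r = ψ r - 4 * lam ^ 2 * r := by simp [hψdef]
      rw [h3]; linarith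
    set u : ℝ → ℝ := fun r => w r ^ 2 + 2 * r with hudef
    have hud : ∀ x ∈ Set.Ioo (0:ℝ) r₁, HasDerivAt u (2 * w x ^ 1 * deriv w x + 2) x := by
      intro x hx
      have hx' : x ∈ Set.Ioo (0:ℝ) a₀ :=
        ⟨hx.1, lt_trans (lt_of_lt_of_le hx.2 hr₁.2) hra⟩
      have h2 : HasDerivAt (fun r : ℝ => 2 * r) 2 x := by
        simpa using (hasDerivAt_id x).const_mul 2
      exact ((hw1 x hx').pow 2).add h2
    have hanti : AntitoneOn u (Set.Ioc 0 r₁) := by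
      apply antitoneOn_of_deriv_nonpos (convex_Ioc 0 r₁)
      · exact ((hcw.mono (fun x hx => ⟨hx.1,
          lt_of_le_of_lt (le_trans hx.2 hr₁.2) hra⟩)).pow 2).add
          (continuousOn_const.mul continuousOn_id)
      · intro x hx
        rw [interior_Ioc] at hx
        exact ((hud x hx).differentiableAt).differentiableWithinAt
      · intro x hx
        rw [interior_Ioc] at hx
        rw [(hud x hx).deriv]
        have hBx := hBneg x ⟨hx.1, hx.2.le⟩
        have hx0 : (0:ℝ) < x := hx.1
        have hpos : 0 ≤ w x ^ 2 / (2 * x) := by positivity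
        have : w x * deriv w x ≤ -1 := by
          have hBB : BB w x = deriv w x * w x + w x ^ 2 / (2 * x) := rfl
          nlinarith [hBx]
        nlinarith [this]
    have hlim : Tendsto u (𝓝[>] (0:ℝ)) (𝓝 0) := by
      have h1 : Tendsto (fun r : ℝ => w r ^ 2) (𝓝[>] 0) (𝓝 0) := by
        have := (lim0.mul lim0)
        simpa [pow_two] using this
      have h2 : Tendsto (fun r : ℝ => 2 * r) (𝓝[>] (0:ℝ)) (𝓝 0) := by
        apply tendsto_nhdsWithin_of_tendsto_nhds
        simpa using (continuous_mul_left (2:ℝ)).tendsto (0:ℝ)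
      simpa using h1.add h2
    have hev : ∀ᶠ r in 𝓝[>] (0:ℝ), u r₁ ≤ u r := by
      filter_upwards [Ioc_mem_nhdsGT_of_mem ⟨le_refl (0:ℝ), hr₁.1⟩] with r hr
      exact hanti hr (Set.right_mem_Ioc.mpr hr₁.1) hr.2
    have hfinal : u r₁ ≤ 0 := ge_of_tendsto hlim hev
    have : 0 < u r₁ := by
      have h01 : (0:ℝ) < r₁ := hr₁.1
      simp only [hudef]
      nlinarith [sq_nonneg (w r₁)]
    linarith
  obtain ⟨m, hm⟩ := hlow
  -- energy bound
  have hEbound : ∀ r ∈ Set.Ioc (0:ℝ) r₀, ∫ x in r..r₀, ee w x ≤ 2 * (ψ r₀ - m) := by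
    intro r hr
    have hrr : r ≤ r₀ := hr.2
    have hIccsub : Set.Icc r r₀ ⊆ Set.Ioo (0:ℝ) a₀ :=
      fun x hx => ⟨lt_of_lt_of_le hr.1 hx.1, lt_of_le_of_lt hx.2 hra⟩
    have hicc : Set.uIcc r r₀ = Set.Icc r r₀ := Set.uIcc_of_le hrr
    have hci : ContinuousOn (fun x => ee w x + w x * Fo lam w x + 4 * lam ^ 2)
        (Set.uIcc r r₀) := by
      rw [hicc]
      exact ((hcee.mono hIccsub).add ((hcw.mono hIccsub).mul (hcFo.mono hIccsub))).add
        continuousOn_const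
    have hftc : ∫ x in r..r₀, (ee w x + w x * Fo lam w x + 4 * lam ^ 2) = ψ r₀ - ψ r := by
      apply intervalIntegral.integral_eq_sub_of_hasDerivAt
      · intro x hx
        rw [hicc] at hx
        have hx' : x ∈ Set.Ioo (0:ℝ) a₀ := hIccsub hx
        have h4 : HasDerivAt (fun s : ℝ => 4 * lam ^ 2 * s) (4 * lam ^ 2) x := by
          simpa using (hasDerivAt_id x).const_mul (4 * lam ^ 2)
        exact (hB x hx').add h4
      · exact hci.intervalIntegrable
    have hmono2 : ∫ x in r..r₀, ee w x / 2
        ≤ ∫ x in r..r₀, (ee w x + w x * Fo lam w x + 4 * lam ^ 2) := by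
      apply intervalIntegral.integral_mono_on hrr
      · apply ContinuousOn.intervalIntegrable
        rw [hicc]
        exact (hcee.mono hIccsub).div_const 2
      · exact hci.intervalIntegrable
      · intro x hx
        have hx' : x ∈ Set.Ioo (0:ℝ) a₀ := hIccsub hx
        have hxr : x ∈ Set.Ioc (0:ℝ) r₀ := ⟨hx'.1, hx.2⟩
        have hkey := ineq_wF (x := w x) (y := deriv w x) (r := x) (lam := lam) hx'.1
          (hsm x hxr)
        simp only [ee, Fo]
        nlinarith [hkey]
    have hhalf : ∫ x in r..r₀, ee w x / 2 = (∫ x in r..r₀, ee w x) / 2 := by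
      rw [intervalIntegral.integral_div]
    have hψ1 : ψ r₀ - ψ r ≤ ψ r₀ - m := by
      have := hm r hr
      linarith
    rw [hhalf, hftc] at hmono2
    have h9 : (∫ x in r..r₀, ee w x) / 2 ≤ ψ r₀ - m := le_trans hmono2 hψ1
    clear_value ψ
    generalize hX : (∫ x in r..r₀, ee w x) = X at h9 ⊢
    linarith [h9]
  -- integrability via dyadic exhaustion
  set M := 2 * (ψ r₀ - m) with hMdef
  have hseq : Tendsto (fun n : ℕ => r₀ / (n + 1)) atTop (𝓝 0) := by
    apply Tendsto.div_atTop (tendsto_const_nhds)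
    exact tendsto_atTop_add_const_right _ 1 tendsto_natCast_atTop_atTop
  have hmem : ∀ n : ℕ, r₀ / (n + 1) ∈ Set.Ioc (0:ℝ) r₀ := by
    intro n
    constructor
    · positivity
    · rw [div_le_iff₀ (by positivity)]
      nlinarith [Nat.cast_nonneg (α := ℝ) n]
  have hfi : ∀ n : ℕ, IntegrableOn (ee w) (Set.Ioc (r₀ / (n + 1)) r₀) := by
    intro n
    apply IntegrableOn.mono_set _ Set.Ioc_subset_Icc_self
    apply ContinuousOn.integrableOn_Icc
    apply hcee.mono
    intro x hx
    exact ⟨lt_of_lt_of_le (hmem n).1 hx.1, lt_of_le_of_lt hx.2 hra⟩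
  apply MeasureTheory.integrableOn_Ioc_of_intervalIntegral_norm_bounded_left
    (I := M) hfi hseq
  filter_upwards with n
  have hb := hEbound _ (hmem n)
  have heq : ∫ x in Set.Ioc (r₀ / (n + 1)) r₀, ‖ee w x‖ = ∫ x in (r₀ / (n+1))..r₀, ee w x := by
    rw [intervalIntegral.integral_of_le (hmem n).2]
    congr 1
    funext x
    exact Real.norm_of_nonneg (by rw [ee]; positivity)
  rw [heq]
  exact hb

end energy

section limits
variable {lam a₀ : ℝ} {w : ℝ → ℝ}

private lemma tlogt_bound {t r₀ : ℝ} (ht : 0 < t) (htr : t ≤ r₀) :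
    t * |Real.log t| ≤ 1 + r₀ ^ 2 := by
  rcases le_or_gt t 1 with h1 | h1
  · have := Real.abs_log_mul_self_lt t ht h1
    have h2 : t * |Real.log t| = |Real.log t * t| := by
      rw [abs_mul, abs_of_pos ht]; ring
    rw [h2]
    nlinarith [sq_nonneg r₀]
  · have hlog : Real.log t ≤ t - 1 := Real.log_le_sub_one_of_pos ht
    have hpos : 0 ≤ Real.log t := Real.log_nonneg h1.le
    rw [abs_of_nonneg hpos]
    have hr1 : (1:ℝ) ≤ r₀ := le_trans h1.le htr
    nlinarith

private lemma div_helper17 {r lam L Q lg : ℝ} (hr : r ≠ 0) :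
    (lam * (r ^ 2 * lg / 2 - r ^ 2 / 4) + L * (r ^ 2 / 2) + Q) / r ^ 2 - lam / 2 * lg
      = L / 2 - lam / 4 + Q / r ^ 2 := by
  field_simp
  ring

private lemma key_limits (hc : ContDiffOn ℝ 2 w (Set.Ioc 0 a₀))
    (ode : ∀ r ∈ Set.Ioo 0 a₀,
      deriv (deriv w) r + deriv (fun t => w t / t) r
        = 5 * w r / (2 * (1 + (w r) ^ 2)) * (deriv w r) ^ 2
          + (w r) ^ 3 / (2 * r ^ 2) * (3 + (w r) ^ 2)
          + (lam / r) * (Real.sqrt (1 + (w r) ^ 2)) ^ 5)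
    (lim0 : Tendsto w (𝓝[>] 0) (𝓝 0))
    {r₀ : ℝ} (h0 : 0 < r₀) (hra : r₀ < a₀)
    (hsm : ∀ r ∈ Set.Ioc (0:ℝ) r₀, |w r| ≤ 1/10) :
    ∃ L₀ : ℝ,
      Tendsto (fun r => w r / r - lam / 2 * Real.log r) (𝓝[>] 0) (𝓝 (L₀/2 - lam/4)) ∧
      Tendsto (fun r => deriv w r - lam / 2 * Real.log r) (𝓝[>] 0) (𝓝 (L₀/2 + lam/4)) := by
  obtain ⟨hcw, hcdw, hcee, hcFo, hcBB, hcvv⟩ := cont_all (lam := lam) hc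
  obtain ⟨hw1, hw2, -⟩ := basic_facts hc
  have hvd := hasDeriv_vv hc ode
  have hEint := energy_integrable hc ode lim0 h0 hra hsm
  have hsub : Set.Ioc (0:ℝ) r₀ ⊆ Set.Ioo 0 a₀ :=
    fun x hx => ⟨hx.1, lt_of_le_of_lt hx.2 hra⟩
  have hne : ∀ r ∈ Set.Ioo (0:ℝ) a₀, r ≠ 0 := fun r hr => ne_of_gt hr.1
  -- continuity of GG
  have hcGG : ContinuousOn (GG lam w) (Set.Ioo 0 a₀) := by
    apply hcFo.sub
    exact continuousOn_const.div continuousOn_id hne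
  -- derivative of hh
  have hhd : ∀ t ∈ Set.Ioo (0:ℝ) a₀, HasDerivAt (hh lam w) (GG lam w t) t := by
    intro t ht
    have hlog : HasDerivAt (fun x : ℝ => lam * Real.log x) (lam * t⁻¹) t :=
      (Real.hasDerivAt_log (ne_of_gt ht.1)).const_mul lam
    have := (hvd t ht).sub hlog
    have heq : Fo lam w t - lam * t⁻¹ = GG lam w t := by
      rw [GG, div_eq_mul_inv]
    rw [heq] at this
    exact this
  -- |GG| ≤ C₁ * ee on Ioc 0 r₀
  have hGbd : ∀ t ∈ Set.Ioc (0:ℝ) r₀, |GG lam w t| ≤ (1 + 6 * |lam| * r₀) * ee w t := by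
    intro t ht
    have key := ineq_G (x := w t) (y := deriv w t) (r := t) (r₀ := r₀) (lam := lam)
      ht.1 ht.2 (hsm t ht)
    have hGeq : GG lam w t = 5 * w t / (2 * (1 + w t ^ 2)) * deriv w t ^ 2
        + w t ^ 3 / (2 * t ^ 2) * (3 + w t ^ 2)
        + lam / t * ((Real.sqrt (1 + w t ^ 2)) ^ 5 - 1) := by
      rw [GG, Fo]; ring
    rw [hGeq, ee]
    exact key
  -- integrability of GG
  have hGmeas : AEStronglyMeasurable (GG lam w) (volume.restrict (Set.Ioc 0 r₀)) :=
    (hcGG.mono hsub).aestronglyMeasurable measurableSet_Ioc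
  have hGint : IntegrableOn (GG lam w) (Set.Ioc 0 r₀) := by
    apply Integrable.mono' (hEint.const_mul (1 + 6 * |lam| * r₀)) hGmeas
    rw [ae_restrict_iff' measurableSet_Ioc]
    exact ae_of_all _ fun t ht => by
      rw [Real.norm_eq_abs]
      exact hGbd t ht
  have hGIcc : IntegrableOn (GG lam w) (Set.Icc 0 r₀) := by
    rwa [integrableOn_Icc_iff_integrableOn_Ioc]
  -- primitive rho
  have hρc : ContinuousOn (rho lam w) (Set.Icc 0 r₀) := by
    have := intervalIntegral.continuousOn_primitive_interval
      (a := 0) (b := r₀) (μ := volume) (f := GG lam w) ?_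
    · rwa [Set.uIcc_of_le h0.le] at this
    · rwa [Set.uIcc_of_le h0.le]
  have hρ0' : rho lam w 0 = 0 := intervalIntegral.integral_same
  have hnn : 𝓝[Set.Ioc (0:ℝ) r₀] (0:ℝ) = 𝓝[>] (0:ℝ) := nhdsWithin_Ioc_eq_nhdsGT h0
  have hρ0 : Tendsto (rho lam w) (𝓝[>] 0) (𝓝 0) := by
    have h1 : ContinuousWithinAt (rho lam w) (Set.Icc 0 r₀) 0 :=
      hρc 0 (Set.left_mem_Icc.mpr h0.le)
    have h2 : Tendsto (rho lam w) (𝓝[Set.Ioc 0 r₀] 0) (𝓝 (rho lam w 0)) :=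
      h1.tendsto.mono_left (nhdsWithin_mono _ Set.Ioc_subset_Icc_self)
    rw [hρ0', hnn] at h2
    exact h2
  -- interval integrability of GG on subintervals
  have hGii : ∀ x ∈ Set.Ioc (0:ℝ) r₀, ∀ y ∈ Set.Ioc (0:ℝ) r₀, x ≤ y →
      IntervalIntegrable (GG lam w) volume x y := by
    intro x hx y hy hxy
    rw [intervalIntegrable_iff, Set.uIoc_of_le hxy]
    exact hGint.mono_set (fun t ht => ⟨lt_trans hx.1 ht.1, le_trans ht.2 hy.2⟩)
  have hGii0 : ∀ x ∈ Set.Ioc (0:ℝ) r₀, IntervalIntegrable (GG lam w) volume 0 x := by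
    intro x hx
    rw [intervalIntegrable_iff, Set.uIoc_of_le hx.1.le]
    exact hGint.mono_set (fun t ht => ⟨ht.1, le_trans ht.2 hx.2⟩)
  -- representation of hh
  have hhrep : ∀ r ∈ Set.Ioc (0:ℝ) r₀,
      hh lam w r = (hh lam w r₀ - rho lam w r₀) + rho lam w r := by
    intro r hr
    have hftc : ∫ t in r..r₀, GG lam w t = hh lam w r₀ - hh lam w r := by
      apply intervalIntegral.integral_eq_sub_of_hasDerivAt
      · intro t ht
        rw [Set.uIcc_of_le hr.2] at ht
        exact hhd t ⟨lt_of_lt_of_le hr.1 ht.1, lt_of_le_of_lt ht.2 hra⟩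
      · exact hGii r hr r₀ (Set.right_mem_Ioc.mpr h0) hr.2
    have hadd : rho lam w r + ∫ t in r..r₀, GG lam w t = rho lam w r₀ :=
      intervalIntegral.integral_add_adjacent_intervals (hGii0 r hr)
        (hGii r hr r₀ (Set.right_mem_Ioc.mpr h0) hr.2)
    have := hadd
    rw [hftc] at this
    linarith
  have hhlim : Tendsto (hh lam w) (𝓝[>] 0) (𝓝 (hh lam w r₀ - rho lam w r₀)) := by
    have h1 : Tendsto (fun r => (hh lam w r₀ - rho lam w r₀) + rho lam w r) (𝓝[>] 0)
        (𝓝 ((hh lam w r₀ - rho lam w r₀) + 0)) := tendsto_const_nhds.add hρ0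
    rw [add_zero] at h1
    apply h1.congr'
    filter_upwards [Ioc_mem_nhdsGT_of_mem ⟨le_refl (0:ℝ), h0⟩] with r hr
    exact (hhrep r hr).symm

  -- bound for rho
  obtain ⟨Ch, hCh⟩ := isCompact_Icc.exists_bound_of_continuousOn hρc
  -- boundedness of hh
  have hhbd : ∀ t ∈ Set.Ioc (0:ℝ) r₀,
      |hh lam w t| ≤ |hh lam w r₀ - rho lam w r₀| + Ch := by
    intro t ht
    rw [hhrep t ht]
    have h1 := hCh t (Set.Ioc_subset_Icc_self ht)
    rw [Real.norm_eq_abs] at h1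
    calc |(hh lam w r₀ - rho lam w r₀) + rho lam w t|
        ≤ |hh lam w r₀ - rho lam w r₀| + |rho lam w t| := abs_add_le _ _
      _ ≤ |hh lam w r₀ - rho lam w r₀| + Ch := by linarith
  have hvv_eq : ∀ t : ℝ, vv w t = hh lam w t + lam * Real.log t := by
    intro t; rw [hh]; ring
  -- φ = t * vv bound and integrability
  have hφbd : ∀ t ∈ Set.Ioc (0:ℝ) r₀, ‖t * vv w t‖
      ≤ |lam| * (1 + r₀ ^ 2) + r₀ * (|hh lam w r₀ - rho lam w r₀| + Ch) := by
    intro t ht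
    rw [Real.norm_eq_abs, hvv_eq, abs_mul, abs_of_pos ht.1]
    have h1 : |hh lam w t + lam * Real.log t| ≤ |hh lam w t| + |lam| * |Real.log t| := by
      calc |hh lam w t + lam * Real.log t| ≤ |hh lam w t| + |lam * Real.log t| := abs_add_le _ _
        _ = |hh lam w t| + |lam| * |Real.log t| := by rw [abs_mul]
    have h2 : t * |hh lam w t + lam * Real.log t|
        ≤ t * (|hh lam w t| + |lam| * |Real.log t|) :=
      mul_le_mul_of_nonneg_left h1 ht.1.le
    have h3 : t * |hh lam w t| ≤ r₀ * (|hh lam w r₀ - rho lam w r₀| + Ch) := by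
      have := hhbd t ht
      have h4 : 0 ≤ |hh lam w t| := abs_nonneg _
      nlinarith [ht.1.le, ht.2]
    have h5 : t * (|lam| * |Real.log t|) ≤ |lam| * (1 + r₀ ^ 2) := by
      have := tlogt_bound ht.1 ht.2
      have h6 : t * (|lam| * |Real.log t|) = |lam| * (t * |Real.log t|) := by ring
      rw [h6]
      exact mul_le_mul_of_nonneg_left this (abs_nonneg lam)
    nlinarith [h2]
  have hφcont : ContinuousOn (fun t => t * vv w t) (Set.Ioo 0 a₀) :=
    continuousOn_id.mul hcvv
  have hφint : IntegrableOn (fun t => t * vv w t) (Set.Ioc 0 r₀) := by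
    apply Integrable.mono'
      (g := fun _ => |lam| * (1 + r₀ ^ 2) + r₀ * (|hh lam w r₀ - rho lam w r₀| + Ch))
      (MeasureTheory.integrableOn_const measure_Ioc_lt_top.ne)
      ((hφcont.mono hsub).aestronglyMeasurable measurableSet_Ioc)
    rw [ae_restrict_iff' measurableSet_Ioc]
    exact ae_of_all _ hφbd
  have hφii0 : ∀ x ∈ Set.Ioc (0:ℝ) r₀, IntervalIntegrable (fun t => t * vv w t) volume 0 x := by
    intro x hx
    rw [intervalIntegrable_iff, Set.uIoc_of_le hx.1.le]
    exact hφint.mono_set (fun t ht => ⟨ht.1, le_trans ht.2 hx.2⟩)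
  have hφii : ∀ x y, 0 < x → x ≤ y → y ≤ r₀ →
      IntervalIntegrable (fun t => t * vv w t) volume x y := by
    intro x y hx hxy hy
    rw [intervalIntegrable_iff, Set.uIoc_of_le hxy]
    exact hφint.mono_set (fun t ht => ⟨lt_trans hx ht.1, le_trans ht.2 hy⟩)
  have hPIcc : IntegrableOn (fun t => t * vv w t) (Set.Icc 0 r₀) := by
    rwa [integrableOn_Icc_iff_integrableOn_Ioc]
  have hPc : ContinuousOn (PP w) (Set.Icc 0 r₀) := by
    have := intervalIntegral.continuousOn_primitive_interval
      (a := 0) (b := r₀) (μ := volume) (f := fun t => t * vv w t) ?_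
    · rw [Set.uIcc_of_le h0.le] at this
      exact this
    · rwa [Set.uIcc_of_le h0.le]
  have hP0 : Tendsto (PP w) (𝓝[>] 0) (𝓝 0) := by
    have h1 : ContinuousWithinAt (PP w) (Set.Icc 0 r₀) 0 := hPc 0 (Set.left_mem_Icc.mpr h0.le)
    have h2 : Tendsto (PP w) (𝓝[Set.Ioc 0 r₀] 0) (𝓝 (PP w 0)) :=
      h1.tendsto.mono_left (nhdsWithin_mono _ Set.Ioc_subset_Icc_self)
    have h3 : PP w 0 = 0 := intervalIntegral.integral_same
    rw [h3, hnn] at h2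
    exact h2
  -- r * w r = PP w r
  have hid0 : Tendsto (fun s : ℝ => s) (𝓝[>] (0:ℝ)) (𝓝 0) :=
    tendsto_id.mono_left nhdsWithin_le_nhds
  have hrw : ∀ r ∈ Set.Ioc (0:ℝ) r₀, r * w r = PP w r := by
    intro r hr
    have hlhs : Tendsto (fun s => PP w r - PP w s + s * w s) (𝓝[>] 0) (𝓝 (PP w r)) := by
      have h2 := hid0.mul lim0
      rw [mul_zero] at h2
      have h3 := (tendsto_const_nhds (x := PP w r) (f := 𝓝[>] (0:ℝ))).sub hP0
      rw [sub_zero] at h3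
      have := h3.add h2
      rw [add_zero] at this
      exact this
    have hev : ∀ᶠ s in 𝓝[>] (0:ℝ), PP w r - PP w s + s * w s = r * w r := by
      filter_upwards [Ioo_mem_nhdsGT_of_mem ⟨le_refl (0:ℝ), hr.1⟩] with s hs
      have hsr : s ≤ r := hs.2.le
      have hftc : ∫ t in s..r, t * vv w t = r * w r - s * w s := by
        have : ∫ t in s..r, t * vv w t = (fun t => t * w t) r - (fun t => t * w t) s := by
          apply intervalIntegral.integral_eq_sub_of_hasDerivAt
          · intro t ht
            rw [Set.uIcc_of_le hsr] at ht
            have ht0 : 0 < t := lt_of_lt_of_le hs.1 ht.1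
            have ht' : t ∈ Set.Ioo (0:ℝ) a₀ :=
              ⟨ht0, lt_of_le_of_lt (le_trans ht.2 hr.2) hra⟩
            have hd := (hasDerivAt_id t).mul (hw1 t ht')
            have heq : t * vv w t = 1 * w t + id t * deriv w t := by
              rw [vv]
              simp only [id_eq]
              field_simp
              ring
            rw [heq]
            exact hd
          · exact hφii s r hs.1 hsr hr.2
        simpa using this
      have hadd : PP w s + ∫ t in s..r, t * vv w t = PP w r :=
        intervalIntegral.integral_add_adjacent_intervals
          (hφii0 s ⟨hs.1, le_trans hsr hr.2⟩) (hφii s r hs.1 hsr hr.2)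
      rw [hftc] at hadd
      linarith
    have := tendsto_nhds_unique (hlhs.congr' hev) tendsto_const_nhds
    exact this.symm
  -- integral of t log t
  have hlogcont : ContinuousOn (fun t : ℝ => t * Real.log t) (Set.Ioc 0 r₀) :=
    continuousOn_id.mul (Real.continuousOn_log.mono (fun t ht => ne_of_gt ht.1))
  have hlogint : IntegrableOn (fun t : ℝ => t * Real.log t) (Set.Ioc 0 r₀) := by
    apply Integrable.mono' (g := fun _ => 1 + r₀ ^ 2)
      (MeasureTheory.integrableOn_const measure_Ioc_lt_top.ne)
      (hlogcont.aestronglyMeasurable measurableSet_Ioc)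
    rw [ae_restrict_iff' measurableSet_Ioc]
    refine ae_of_all _ fun t ht => ?_
    rw [Real.norm_eq_abs, abs_mul, abs_of_pos ht.1]
    exact tlogt_bound ht.1 ht.2
  have hlogii0 : ∀ x ∈ Set.Ioc (0:ℝ) r₀,
      IntervalIntegrable (fun t : ℝ => t * Real.log t) volume 0 x := by
    intro x hx
    rw [intervalIntegrable_iff, Set.uIoc_of_le hx.1.le]
    exact hlogint.mono_set (fun t ht => ⟨ht.1, le_trans ht.2 hx.2⟩)
  have hlogii : ∀ x y, 0 < x → x ≤ y → y ≤ r₀ →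
      IntervalIntegrable (fun t : ℝ => t * Real.log t) volume x y := by
    intro x y hx hxy hy
    rw [intervalIntegrable_iff, Set.uIoc_of_le hxy]
    exact hlogint.mono_set (fun t ht => ⟨lt_trans hx ht.1, le_trans ht.2 hy⟩)
  have hJc : ContinuousOn (fun x => ∫ t in (0:ℝ)..x, t * Real.log t) (Set.Icc 0 r₀) := by
    have := intervalIntegral.continuousOn_primitive_interval
      (a := 0) (b := r₀) (μ := volume) (f := fun t : ℝ => t * Real.log t) ?_
    · rw [Set.uIcc_of_le h0.le] at this
      exact this
    · rw [Set.uIcc_of_le h0.le]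
      rwa [integrableOn_Icc_iff_integrableOn_Ioc]
  have hxid : ∀ t : ℝ, 0 < t →
      HasDerivAt (fun x : ℝ => x ^ 2 * Real.log x / 2 - x ^ 2 / 4) (t * Real.log t) t := by
    intro t ht
    have h1 : HasDerivAt (fun x : ℝ => x ^ 2) (2 * t) t := by
      simpa using hasDerivAt_pow 2 t
    have h2 : HasDerivAt Real.log t⁻¹ t := Real.hasDerivAt_log (ne_of_gt ht)
    have h3 := (h1.mul h2).div_const 2
    have h4 := (h1.div_const 4)
    have h5 := h3.sub h4
    refine h5.congr_deriv ?_
    field_simp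
    ring
  have hξ0 : Tendsto (fun s : ℝ => s ^ 2 * Real.log s / 2 - s ^ 2 / 4) (𝓝[>] 0) (𝓝 0) := by
    have hgtend : Tendsto (fun s : ℝ => s * (1 + r₀ ^ 2) / 2 + s ^ 2 / 4) (𝓝[>] (0:ℝ))
        (𝓝 0) := by
      have hcont : Continuous (fun s : ℝ => s * (1 + r₀ ^ 2) / 2 + s ^ 2 / 4) :=
        ((continuous_id.mul continuous_const).div_const 2).add
          ((continuous_pow 2).div_const 4)
      have := hcont.tendsto 0
      apply tendsto_nhdsWithin_of_tendsto_nhds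
      simpa using this
    apply squeeze_zero_norm' ?_ hgtend
    · filter_upwards [Ioc_mem_nhdsGT_of_mem ⟨le_refl (0:ℝ), h0⟩] with s hs
      have hb := tlogt_bound hs.1 hs.2
      have h2 : |s ^ 2 * Real.log s| = s * (s * |Real.log s|) := by
        rw [abs_mul, abs_of_nonneg (sq_nonneg s)]; ring
      have h3 : s * (s * |Real.log s|) ≤ s * (1 + r₀ ^ 2) :=
        mul_le_mul_of_nonneg_left hb hs.1.le
      have h4 : ‖s ^ 2 * Real.log s / 2 - s ^ 2 / 4‖
          ≤ |s ^ 2 * Real.log s| / 2 + s ^ 2 / 4 := by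
        rw [Real.norm_eq_abs]
        have := abs_sub (s ^ 2 * Real.log s / 2) (s ^ 2 / 4)
        calc |s ^ 2 * Real.log s / 2 - s ^ 2 / 4|
            ≤ |s ^ 2 * Real.log s / 2| + |s ^ 2 / 4| := abs_sub _ _
          _ = |s ^ 2 * Real.log s| / 2 + s ^ 2 / 4 := by
              rw [abs_div, abs_div, abs_of_nonneg (by norm_num : (0:ℝ) ≤ 2),
                abs_of_nonneg (by norm_num : (0:ℝ) ≤ 4), abs_of_nonneg (sq_nonneg s)]
      rw [h2] at h4
      linarith
  have hJ0 : Tendsto (fun x => ∫ t in (0:ℝ)..x, t * Real.log t) (𝓝[>] 0) (𝓝 0) := by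
    have h1 : ContinuousWithinAt (fun x => ∫ t in (0:ℝ)..x, t * Real.log t)
        (Set.Icc 0 r₀) 0 := hJc 0 (Set.left_mem_Icc.mpr h0.le)
    have h2 := h1.tendsto.mono_left (nhdsWithin_mono _ Set.Ioc_subset_Icc_self)
    rw [intervalIntegral.integral_same, hnn] at h2
    exact h2
  have hJ : ∀ r ∈ Set.Ioc (0:ℝ) r₀,
      ∫ t in (0:ℝ)..r, t * Real.log t = r ^ 2 * Real.log r / 2 - r ^ 2 / 4 := by
    intro r hr
    have hlhs : Tendsto
        (fun s => (r ^ 2 * Real.log r / 2 - r ^ 2 / 4)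
          - (s ^ 2 * Real.log s / 2 - s ^ 2 / 4) + (∫ t in (0:ℝ)..s, t * Real.log t))
        (𝓝[>] 0) (𝓝 (r ^ 2 * Real.log r / 2 - r ^ 2 / 4)) := by
      have h3 := (tendsto_const_nhds
        (x := r ^ 2 * Real.log r / 2 - r ^ 2 / 4) (f := 𝓝[>] (0:ℝ))).sub hξ0
      rw [sub_zero] at h3
      have := h3.add hJ0
      rw [add_zero] at this
      exact this
    have hev : ∀ᶠ s in 𝓝[>] (0:ℝ),
        (r ^ 2 * Real.log r / 2 - r ^ 2 / 4) - (s ^ 2 * Real.log s / 2 - s ^ 2 / 4)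
          + (∫ t in (0:ℝ)..s, t * Real.log t) = ∫ t in (0:ℝ)..r, t * Real.log t := by
      filter_upwards [Ioo_mem_nhdsGT_of_mem ⟨le_refl (0:ℝ), hr.1⟩] with s hs
      have hsr : s ≤ r := hs.2.le
      have hftc : ∫ t in s..r, t * Real.log t
          = (r ^ 2 * Real.log r / 2 - r ^ 2 / 4) - (s ^ 2 * Real.log s / 2 - s ^ 2 / 4) := by
        have : ∫ t in s..r, t * Real.log t
            = (fun x : ℝ => x ^ 2 * Real.log x / 2 - x ^ 2 / 4) r
              - (fun x : ℝ => x ^ 2 * Real.log x / 2 - x ^ 2 / 4) s := by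
          apply intervalIntegral.integral_eq_sub_of_hasDerivAt
          · intro t ht
            rw [Set.uIcc_of_le hsr] at ht
            exact hxid t (lt_of_lt_of_le hs.1 ht.1)
          · exact hlogii s r hs.1 hsr hr.2
        simpa using this
      have hadd : (∫ t in (0:ℝ)..s, t * Real.log t) + ∫ t in s..r, t * Real.log t
          = ∫ t in (0:ℝ)..r, t * Real.log t :=
        intervalIntegral.integral_add_adjacent_intervals
          (hlogii0 s ⟨hs.1, le_trans hsr hr.2⟩) (hlogii s r hs.1 hsr hr.2)
      rw [hftc] at hadd
      linarith
    exact (tendsto_nhds_unique (hlhs.congr' hev) tendsto_const_nhds).symm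
  -- integrability of t * rho
  have hCh0 : 0 ≤ Ch := le_trans (norm_nonneg _) (hCh 0 (Set.left_mem_Icc.mpr h0.le))
  have hρcont' : ContinuousOn (rho lam w) (Set.Ioc 0 r₀) := hρc.mono Set.Ioc_subset_Icc_self
  have htρcontOn : ContinuousOn (fun t : ℝ => t * rho lam w t) (Set.Ioc 0 r₀) :=
    ContinuousOn.mul continuousOn_id hρcont'
  have htρint : IntegrableOn (fun t => t * rho lam w t) (Set.Ioc 0 r₀) := by
    apply Integrable.mono' (g := fun _ => r₀ * Ch)
      (MeasureTheory.integrableOn_const measure_Ioc_lt_top.ne)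
      (htρcontOn.aestronglyMeasurable measurableSet_Ioc)
    rw [ae_restrict_iff' measurableSet_Ioc]
    refine ae_of_all _ fun t ht => ?_
    rw [Real.norm_eq_abs, abs_mul, abs_of_pos ht.1]
    have h1 := hCh t (Set.Ioc_subset_Icc_self ht)
    rw [Real.norm_eq_abs] at h1
    have h2 : t * |rho lam w t| ≤ t * Ch := mul_le_mul_of_nonneg_left h1 ht.1.le
    nlinarith [ht.2, ht.1.le]
  have htρii0 : ∀ x ∈ Set.Ioc (0:ℝ) r₀,
      IntervalIntegrable (fun t => t * rho lam w t) volume 0 x := by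
    intro x hx
    rw [intervalIntegrable_iff, Set.uIoc_of_le hx.1.le]
    exact htρint.mono_set (fun t ht => ⟨ht.1, le_trans ht.2 hx.2⟩)
  -- splitting of PP
  have hPPsplit : ∀ r ∈ Set.Ioc (0:ℝ) r₀,
      PP w r = lam * (r ^ 2 * Real.log r / 2 - r ^ 2 / 4)
        + (hh lam w r₀ - rho lam w r₀) * (r ^ 2 / 2) + ∫ t in (0:ℝ)..r, t * rho lam w t := by
    intro r hr
    have hcong : PP w r = ∫ t in (0:ℝ)..r,
        (lam * (t * Real.log t) + ((hh lam w r₀ - rho lam w r₀) * t + t * rho lam w t)) := by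
      rw [PP]
      apply intervalIntegral.integral_congr_ae
      rw [Set.uIoc_of_le hr.1.le]
      refine ae_of_all _ fun t ht => ?_
      have ht' : t ∈ Set.Ioc (0:ℝ) r₀ := ⟨ht.1, le_trans ht.2 hr.2⟩
      have h1 := hvv_eq t
      have h2 := hhrep t ht'
      rw [h1, h2]
      ring
    rw [hcong]
    have i1 : IntervalIntegrable (fun t : ℝ => lam * (t * Real.log t)) volume 0 r :=
      (hlogii0 r hr).const_mul lam
    have i3 : IntervalIntegrable (fun t : ℝ => t * rho lam w t) volume 0 r := htρii0 r hr
    have i2 : IntervalIntegrable (fun t : ℝ => (hh lam w r₀ - rho lam w r₀) * t) volume 0 r :=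
      (continuous_const.mul continuous_id).intervalIntegrable 0 r
    rw [intervalIntegral.integral_add i1 (i2.add i3), intervalIntegral.integral_add i2 i3]
    have e1 : ∫ t in (0:ℝ)..r, lam * (t * Real.log t)
        = lam * (r ^ 2 * Real.log r / 2 - r ^ 2 / 4) := by
      rw [intervalIntegral.integral_const_mul, hJ r hr]
    have e2 : ∫ t in (0:ℝ)..r, (hh lam w r₀ - rho lam w r₀) * t
        = (hh lam w r₀ - rho lam w r₀) * (r ^ 2 / 2) := by
      rw [intervalIntegral.integral_const_mul, integral_id]
      ring
    rw [e1, e2]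
    ring
  -- Q/r² → 0
  have hQlim : Tendsto (fun r => (∫ t in (0:ℝ)..r, t * rho lam w t) / r ^ 2)
      (𝓝[>] 0) (𝓝 0) := by
    rw [Metric.tendsto_nhdsWithin_nhds]
    intro ε hε
    have hev : ∀ᶠ t in 𝓝[>] (0:ℝ), |rho lam w t| < ε / 2 ∧ t ∈ Set.Ioc (0:ℝ) r₀ := by
      have h1 : ∀ᶠ t in 𝓝[>] (0:ℝ), |rho lam w t| < ε / 2 := by
        have := Metric.tendsto_nhds.1 hρ0 (ε / 2) (by positivity)
        simpa [Real.dist_eq] using this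
      exact h1.and (Ioc_mem_nhdsGT_of_mem ⟨le_refl (0:ℝ), h0⟩)
    obtain ⟨u, hu, husub⟩ := mem_nhdsGT_iff_exists_Ioc_subset.1 hev
    refine ⟨u, hu, fun {r} hrpos hru => ?_⟩
    rw [Real.dist_eq, sub_zero] at hru ⊢
    have hrIoc : r ∈ Set.Ioc (0:ℝ) u := ⟨hrpos, by
      rw [abs_of_pos hrpos] at hru; exact hru.le⟩
    have hrmem := husub hrIoc
    have hrr₀ : r ∈ Set.Ioc (0:ℝ) r₀ := hrmem.2
    have hQbd : ‖∫ t in (0:ℝ)..r, t * rho lam w t‖ ≤ |∫ t in (0:ℝ)..r, ε / 2 * t| := by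
      apply intervalIntegral.norm_integral_le_abs_of_norm_le
      · rw [Set.uIoc_of_le hrpos.le, ae_restrict_iff' measurableSet_Ioc]
        refine ae_of_all _ fun t ht => ?_
        have htu : t ∈ Set.Ioc (0:ℝ) u := ⟨ht.1, le_trans ht.2 hrIoc.2⟩
        have h5 := (husub htu).1
        rw [Real.norm_eq_abs, abs_mul, abs_of_pos ht.1]
        have := mul_le_mul_of_nonneg_left h5.le ht.1.le
        linarith [this]
      · exact (continuous_const.mul continuous_id).intervalIntegrable 0 r
    have hQval : ∫ t in (0:ℝ)..r, ε / 2 * t = ε / 4 * r ^ 2 := by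
      rw [intervalIntegral.integral_const_mul, integral_id]
      ring
    rw [hQval] at hQbd
    have hrp : (0:ℝ) < r := hrpos
    have hr2 : (0:ℝ) < r ^ 2 := pow_pos hrp 2
    have hε4 : (0:ℝ) < ε / 4 := by linarith
    have habs : |ε / 4 * r ^ 2| = ε / 4 * r ^ 2 := abs_of_pos (mul_pos hε4 hr2)
    rw [habs, Real.norm_eq_abs] at hQbd
    rw [abs_div, abs_of_nonneg (sq_nonneg r), div_lt_iff₀ hr2]
    nlinarith [hQbd, hε, hr2]
  -- conclusion
  have hTendA : Tendsto (fun r => w r / r - lam / 2 * Real.log r) (𝓝[>] 0)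
      (𝓝 ((hh lam w r₀ - rho lam w r₀) / 2 - lam / 4)) := by
    have hA : Tendsto (fun r => ((hh lam w r₀ - rho lam w r₀) / 2 - lam / 4)
        + (∫ t in (0:ℝ)..r, t * rho lam w t) / r ^ 2) (𝓝[>] 0)
        (𝓝 ((hh lam w r₀ - rho lam w r₀) / 2 - lam / 4)) := by
      have := (tendsto_const_nhds
        (x := (hh lam w r₀ - rho lam w r₀) / 2 - lam / 4) (f := 𝓝[>] (0:ℝ))).add hQlim
      rw [add_zero] at this
      exact this
    apply hA.congr'
    filter_upwards [Ioc_mem_nhdsGT_of_mem ⟨le_refl (0:ℝ), h0⟩] with r hr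
    have hr0 : r ≠ 0 := ne_of_gt hr.1
    have h1 := hrw r hr
    have h2 := hPPsplit r hr
    have h3 : w r / r = PP w r / r ^ 2 := by
      rw [← h1, pow_two, mul_div_mul_left _ _ hr0]
    rw [h3, h2]
    exact (div_helper17 hr0).symm
  refine ⟨hh lam w r₀ - rho lam w r₀, hTendA, ?_⟩
  have hcomb := hhlim.sub hTendA
  have hval : hh lam w r₀ - rho lam w r₀
      - ((hh lam w r₀ - rho lam w r₀) / 2 - lam / 4)
      = (hh lam w r₀ - rho lam w r₀) / 2 + lam / 4 := by ring
  rw [hval] at hcomb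
  apply hcomb.congr'
  filter_upwards [Ioc_mem_nhdsGT_of_mem ⟨le_refl (0:ℝ), h0⟩] with r hr
  have : hh lam w r = deriv w r + w r / r - lam * Real.log r := by
    rw [hh, vv]
  rw [this]
  ring

end limits

private noncomputable def gfun (lam : ℝ) (w : ℝ → ℝ) (r : ℝ) : ℝ :=
  if r = 0 then 0 else w r - lam / 2 * r * Real.log r

private noncomputable def g1fun (lam a₀ L₀ : ℝ) (w : ℝ → ℝ) (r : ℝ) : ℝ :=
  if r = 0 then L₀ / 2 - lam / 4
  else derivWithin w (Set.Ioc 0 a₀) r - lam / 2 * (Real.log r + 1)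

/-- Let `w ∈ C²((0,a₀])` solve
`w'' + (w/r)' = (5w/(2(1+w²)))(w')² + (w³/(2r²))(3+w²) + (λ/r)(1+w²)^{5/2}` with
`lim_{r→0⁺} w(r) = 0`. Then `w(r) - (λ/2) r log r` extends to a C¹ function on
`[0,a₀]`; in particular `lim_{r→0⁺}(w'(r) - (λ/2)log r)` exists. -/
theorem stmt_17 (lam a₀ : ℝ) (ha : 0 < a₀) (w : ℝ → ℝ)
    (hc : ContDiffOn ℝ 2 w (Set.Ioc 0 a₀))
    (ode : ∀ r ∈ Set.Ioo 0 a₀,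
      deriv (deriv w) r + deriv (fun t => w t / t) r
        = 5 * w r / (2 * (1 + (w r) ^ 2)) * (deriv w r) ^ 2
          + (w r) ^ 3 / (2 * r ^ 2) * (3 + (w r) ^ 2)
          + (lam / r) * (Real.sqrt (1 + (w r) ^ 2)) ^ 5)
    (lim0 : Tendsto w (𝓝[>] 0) (𝓝 0)) :
    (∃ g : ℝ → ℝ, ContDiffOn ℝ 1 g (Set.Icc 0 a₀) ∧
      ∀ r ∈ Set.Ioc 0 a₀, g r = w r - lam / 2 * r * Real.log r) ∧
    ∃ L : ℝ, Tendsto (fun r => deriv w r - lam / 2 * Real.log r) (𝓝[>] 0) (𝓝 L) := by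
  -- find r₀ with smallness
  obtain ⟨r₀, h0, hra, hsm⟩ : ∃ r₀, 0 < r₀ ∧ r₀ < a₀ ∧
      ∀ r ∈ Set.Ioc (0:ℝ) r₀, |w r| ≤ 1/10 := by
    have hev : ∀ᶠ r in 𝓝[>] (0:ℝ), |w r| < 1/10 := by
      have := Metric.tendsto_nhds.1 lim0 (1/10) (by norm_num)
      simpa [Real.dist_eq] using this
    obtain ⟨u, hu, husub⟩ := mem_nhdsGT_iff_exists_Ioc_subset.1 hev
    refine ⟨min u (a₀ / 2), lt_min hu (by linarith), ?_, ?_⟩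
    · exact lt_of_le_of_lt (min_le_right _ _) (by linarith)
    · intro r hr
      have : r ∈ Set.Ioc (0:ℝ) u := ⟨hr.1, le_trans hr.2 (min_le_left _ _)⟩
      exact (husub this).le
  obtain ⟨L₀, hTendA, hTendD⟩ := key_limits hc ode lim0 h0 hra hsm
  constructor
  · -- the C¹ extension
    have huIcc : UniqueDiffOn ℝ (Set.Icc (0:ℝ) a₀) := uniqueDiffOn_Icc ha
    have hIocIcc : ∀ x ∈ Set.Ioc (0:ℝ) a₀, Set.Ioc (0:ℝ) a₀ ∈ 𝓝[Set.Icc 0 a₀] x := by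
      intro x hx
      have h1 : Set.Icc (0:ℝ) a₀ ∩ Set.Ioi 0 ∈ 𝓝[Set.Icc 0 a₀] x :=
        inter_mem_nhdsWithin _ (isOpen_Ioi.mem_nhds hx.1)
      have h2 : Set.Icc (0:ℝ) a₀ ∩ Set.Ioi 0 = Set.Ioc 0 a₀ := by
        ext y
        constructor
        · rintro ⟨⟨-, h2⟩, h3⟩; exact ⟨h3, h2⟩
        · rintro ⟨h1, h2⟩; exact ⟨⟨h1.le, h2⟩, h1⟩
      rwa [h2] at h1
    have hgeq : ∀ x ∈ Set.Ioc (0:ℝ) a₀,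
        gfun lam w x = w x - lam / 2 * x * Real.log x := by
      intro x hx
      rw [gfun, if_neg (ne_of_gt hx.1)]
    -- derivative at interior/right points
    have hder : ∀ x ∈ Set.Icc (0:ℝ) a₀,
        HasDerivWithinAt (gfun lam w) (g1fun lam a₀ L₀ w x) (Set.Icc 0 a₀) x := by
      intro x hx
      rcases eq_or_ne x 0 with h0x | h0x
      · -- x = 0 : slope argument
        subst h0x
        rw [hasDerivWithinAt_iff_tendsto_slope]
        have hset : Set.Icc (0:ℝ) a₀ \ {0} = Set.Ioc 0 a₀ := Set.Icc_diff_left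
        rw [hset]
        have hval : g1fun lam a₀ L₀ w 0 = L₀ / 2 - lam / 4 := by rw [g1fun, if_pos rfl]
        rw [hval]
        have hnhds : 𝓝[Set.Ioc (0:ℝ) a₀] (0:ℝ) = 𝓝[>] 0 :=
          nhdsWithin_Ioc_eq_nhdsGT ha
        rw [hnhds]
        apply hTendA.congr'
        filter_upwards [Ioc_mem_nhdsGT_of_mem ⟨le_refl (0:ℝ), ha⟩] with y hy
        have hy0 : y ≠ 0 := ne_of_gt hy.1
        rw [slope_def_field, hgeq y hy, gfun, if_pos rfl]
        field_simp
        ring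
      · -- x > 0
        have hx' : x ∈ Set.Ioc (0:ℝ) a₀ := ⟨lt_of_le_of_ne hx.1 (Ne.symm h0x), hx.2⟩
        have hx0 : (0:ℝ) < x := hx'.1
        have hw' : HasDerivWithinAt w (derivWithin w (Set.Ioc 0 a₀) x) (Set.Ioc 0 a₀) x :=
          (hc.differentiableOn (by norm_num) x hx').hasDerivWithinAt
        have hsm2 : HasDerivAt (fun r : ℝ => lam / 2 * r * Real.log r)
            (lam / 2 * (Real.log x + 1)) x := by
          have h1 : HasDerivAt (fun r : ℝ => r * Real.log r)
              (1 * Real.log x + x * x⁻¹) x :=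
            (hasDerivAt_id x).mul (Real.hasDerivAt_log (ne_of_gt hx0))
          have h2 := h1.const_mul (lam / 2)
          have heq : (fun r : ℝ => lam / 2 * (r * Real.log r))
              = fun r : ℝ => lam / 2 * r * Real.log r := by
            funext r; ring
          rw [heq] at h2
          refine h2.congr_deriv ?_
          field_simp
        have hcomb : HasDerivWithinAt (fun r => w r - lam / 2 * r * Real.log r)
            (g1fun lam a₀ L₀ w x) (Set.Ioc 0 a₀) x := by
          have := hw'.sub hsm2.hasDerivWithinAt
          rw [g1fun, if_neg h0x]
          exact this
        have hIcc2 : HasDerivWithinAt (fun r => w r - lam / 2 * r * Real.log r)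
            (g1fun lam a₀ L₀ w x) (Set.Icc 0 a₀) x :=
          hcomb.mono_of_mem_nhdsWithin (hIocIcc x hx')
        apply hIcc2.congr_of_eventuallyEq
        · filter_upwards [hIocIcc x hx'] with y hy
          exact hgeq y hy
        · exact hgeq x hx'
    -- continuity of g1fun on Icc
    have hD1 : ContDiffOn ℝ 1 (derivWithin w (Set.Ioc 0 a₀)) (Set.Ioc 0 a₀) :=
      hc.derivWithin (uniqueDiffOn_Ioc 0 a₀) (by norm_num)
    have hcd : ContinuousOn (derivWithin w (Set.Ioc 0 a₀)) (Set.Ioc 0 a₀) :=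
      hD1.continuousOn
    have hg1cont : ContinuousOn (g1fun lam a₀ L₀ w) (Set.Icc 0 a₀) := by
      intro x hx
      rcases eq_or_ne x 0 with h0x | h0x
      · subst h0x
        have hval0 : g1fun lam a₀ L₀ w 0 = L₀ / 2 - lam / 4 := by
          rw [g1fun, if_pos rfl]
        show Tendsto (g1fun lam a₀ L₀ w) (𝓝[Set.Icc (0:ℝ) a₀] 0)
          (𝓝 (g1fun lam a₀ L₀ w 0))
        rw [hval0]
        have h1 : Tendsto (g1fun lam a₀ L₀ w) (𝓝[>] 0) (𝓝 (L₀ / 2 - lam / 4)) := by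
          have h2 : Tendsto (fun r => (deriv w r - lam / 2 * Real.log r) - lam / 2)
              (𝓝[>] (0:ℝ)) (𝓝 (L₀ / 2 + lam / 4 - lam / 2)) :=
            hTendD.sub tendsto_const_nhds
          have hval2 : L₀ / 2 + lam / 4 - lam / 2 = L₀ / 2 - lam / 4 := by ring
          rw [hval2] at h2
          apply h2.congr'
          filter_upwards [Ioo_mem_nhdsGT_of_mem ⟨le_refl (0:ℝ), ha⟩] with y hy
          have hy0 : y ≠ 0 := ne_of_gt hy.1
          have hmem : Set.Ioc (0:ℝ) a₀ ∈ 𝓝 y :=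
            mem_nhds_iff.2 ⟨Set.Ioo 0 a₀, Set.Ioo_subset_Ioc_self, isOpen_Ioo, hy⟩
          rw [g1fun, if_neg hy0, derivWithin_of_mem_nhds hmem]
          ring
        have h3 : 𝓝[Set.Icc (0:ℝ) a₀] (0:ℝ) ≤ 𝓝[Set.Icc (0:ℝ) a₀ \ {0}] 0 ⊔ pure 0 := by
          rw [← nhdsWithin_singleton, ← nhdsWithin_union]
          apply nhdsWithin_mono
          intro y hy
          rcases eq_or_ne y 0 with h | h
          · exact Or.inr (by simp [h])
          · exact Or.inl ⟨hy, h⟩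
        apply Tendsto.mono_left _ h3
        rw [tendsto_sup]
        constructor
        · have hset : Set.Icc (0:ℝ) a₀ \ {0} = Set.Ioc 0 a₀ := Set.Icc_diff_left
          rw [hset, nhdsWithin_Ioc_eq_nhdsGT ha]
          exact h1
        · rw [tendsto_pure_left]
          intro s hs
          rw [g1fun, if_pos rfl]
          exact mem_of_mem_nhds hs
      · have hx' : x ∈ Set.Ioc (0:ℝ) a₀ := ⟨lt_of_le_of_ne hx.1 (Ne.symm h0x), hx.2⟩
        have hx0 : (0:ℝ) < x := hx'.1
        have hf1 : ContinuousWithinAt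
            (fun r => derivWithin w (Set.Ioc 0 a₀) r - lam / 2 * (Real.log r + 1))
            (Set.Ioc 0 a₀) x := by
          exact (hcd x hx').sub (continuousWithinAt_const.mul
            (((Real.continuousAt_log (ne_of_gt hx0)).continuousWithinAt).add
              continuousWithinAt_const))
        have hf2 : ContinuousWithinAt
            (fun r => derivWithin w (Set.Ioc 0 a₀) r - lam / 2 * (Real.log r + 1))
            (Set.Icc 0 a₀) x := hf1.mono_of_mem_nhdsWithin (hIocIcc x hx')
        apply hf2.congr_of_eventuallyEq
        · filter_upwards [hIocIcc x hx'] with y hy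
          rw [g1fun, if_neg (ne_of_gt hy.1)]
        · rw [g1fun, if_neg h0x]
    -- assemble ContDiffOn
    refine ⟨gfun lam w, ?_, hgeq⟩
    have h1eq : (1 : WithTop ℕ∞) = 0 + 1 := by norm_num
    rw [h1eq, contDiffOn_succ_iff_derivWithin huIcc]
    refine ⟨fun x hx => (hder x hx).differentiableWithinAt, ?_, ?_⟩
    · intro h
      exact absurd h (by norm_num)
    · rw [contDiffOn_zero]
      apply hg1cont.congr
      intro x hx
      exact (hder x hx).derivWithin (huIcc x hx)
  · exact ⟨L₀/2 + lam/4, hTendD⟩
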